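/- arXiv:2110.06244 — 2 statements merged into one kernel-verified Lean document; each statement's English description precedes it below -/
import Mathlib

section
/- Let p be an odd prime and let τ_i = T_i mod p for 0 ≤ i ≤ p−1, where T_i is the i-th central trinomial coefficient. Suppose no τ_i equals 0 and some τ_i is a primitive root modulo p. Then the sequence (T_n mod p)_{n≥0} is uniformly recurrent. -/
def trinomial (n : ℕ) : ℕ :=
  ∑ k ∈ Finset.range (n + 1), n.choose (2 * k) * (2 * k).choose k

section PolyPart
open Polynomial Finset

lemma coeff_one_add_X_sq_pow (a b : ℕ) :
    ((1 + X ^ 2 : Polynomial ℕ) ^ a).coeff b = if 2 ∣ b then a.choose (b / 2) else 0 := by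
  have h : (1 + X ^ 2 : Polynomial ℕ) = expand ℕ 2 (1 + X) := by
    rw [map_add, map_one, expand_X]
  rw [h, ← map_pow, coeff_expand (by norm_num)]
  simp [coeff_one_add_X_pow]

lemma trinomial_eq_coeff (n : ℕ) :
    ((1 + X + X ^ 2 : Polynomial ℕ) ^ n).coeff n = _root_.trinomial n := by
  have h : (1 + X + X ^ 2 : Polynomial ℕ) = X + (1 + X ^ 2) := by ring
  rw [h, add_pow, finset_sum_coeff]
  have step : ∀ k ∈ range (n + 1),
      (X ^ k * (1 + X ^ 2 : Polynomial ℕ) ^ (n - k) * (n.choose k : Polynomial ℕ)).coeff n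
        = (if 2 ∣ (n - k) then (n - k).choose ((n - k) / 2) else 0) * n.choose k := by
    intro k hk
    rw [mem_range, Nat.lt_succ_iff] at hk
    rw [← C_eq_natCast, coeff_mul_C]
    have hmid : (X ^ k * (1 + X ^ 2 : Polynomial ℕ) ^ (n - k)).coeff n
        = ((1 + X ^ 2 : Polynomial ℕ) ^ (n - k)).coeff (n - k) := by
      have := coeff_X_pow_mul ((1 + X ^ 2 : Polynomial ℕ) ^ (n - k)) k (n - k)
      rw [show n - k + k = n by omega] at this
      exact this
    rw [hmid, coeff_one_add_X_sq_pow, Nat.cast_id]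
  rw [Finset.sum_congr rfl step]
  have refl1 : ∑ k ∈ range (n + 1),
      (if 2 ∣ (n - k) then (n - k).choose ((n - k) / 2) else 0) * n.choose k
      = ∑ k ∈ range (n + 1),
      (if 2 ∣ k then k.choose (k / 2) else 0) * n.choose (n - k) := by
    rw [← Finset.sum_range_reflect]
    apply Finset.sum_congr rfl
    intro k hk
    rw [mem_range, Nat.lt_succ_iff] at hk
    have h1 : n + 1 - 1 - k = n - k := by omega
    rw [h1]
    have h2 : n - (n - k) = k := by omega
    rw [h2]
  rw [refl1]
  have refl2 : ∀ k ∈ range (n + 1), (if 2 ∣ k then k.choose (k / 2) else 0) * n.choose (n - k)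
      = (if 2 ∣ k then k.choose (k / 2) * n.choose k else 0) := by
    intro k hk
    rw [mem_range, Nat.lt_succ_iff] at hk
    rw [Nat.choose_symm hk]
    split <;> simp
  rw [Finset.sum_congr rfl refl2, ← Finset.sum_filter]
  have himg : (range (n + 1)).filter (fun k => 2 ∣ k)
      = (range (n / 2 + 1)).image (fun j => 2 * j) := by
    ext k
    simp only [mem_filter, mem_range, mem_image, Nat.lt_succ_iff]
    constructor
    · rintro ⟨hk, j, rfl⟩
      exact ⟨j, by omega, rfl⟩
    · rintro ⟨j, hj, rfl⟩
      exact ⟨by omega, j, rfl⟩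
  rw [himg, Finset.sum_image (fun a _ b _ h => by omega)]
  have mid : ∑ j ∈ range (n / 2 + 1), (2 * j).choose (2 * j / 2) * n.choose (2 * j)
      = _root_.trinomial n := by
    have e : ∀ j ∈ range (n / 2 + 1),
        (2 * j).choose (2 * j / 2) * n.choose (2 * j) = n.choose (2 * j) * (2 * j).choose j := by
      intro j _
      rw [Nat.mul_div_cancel_left _ two_pos, Nat.mul_comm]
    rw [Finset.sum_congr rfl e]
    unfold _root_.trinomial
    apply Finset.sum_subset (Finset.range_subset_range.2 (by omega))
    intro j _ hj
    rw [mem_range, Nat.lt_succ_iff] at hj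
    rw [Nat.choose_eq_zero_of_lt (by omega), zero_mul]
  rw [← mid]

section
variable {p : ℕ} [Fact p.Prime]

lemma trinomial_cast_eq (n : ℕ) :
    ((trinomial n : ZMod p)) = ((1 + X + X ^ 2 : Polynomial (ZMod p)) ^ n).coeff n := by
  rw [← trinomial_eq_coeff]
  have : ((1 + X + X ^ 2 : Polynomial (ZMod p)) ^ n)
      = Polynomial.map (Nat.castRingHom (ZMod p)) ((1 + X + X ^ 2 : Polynomial ℕ) ^ n) := by
    simp [Polynomial.map_pow]
  rw [this, coeff_map]
  simp

lemma trinomial_lucas' (a b : ℕ) (hb : b < p) :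
    ((trinomial (a * p + b) : ZMod p)) = (trinomial a : ZMod p) * trinomial b := by
  have hp : p.Prime := Fact.out
  set F : Polynomial (ZMod p) := 1 + X + X ^ 2 with hF
  have hdegF : F.natDegree ≤ 2 := by
    apply le_trans (natDegree_add_le _ _)
    simp [natDegree_X_pow]
    apply le_trans (natDegree_add_le _ _)
    simp
  have hFp : F ^ p = expand (ZMod p) p F := by
    rw [hF]
    rw [add_pow_char, add_pow_char, one_pow]
    rw [map_add, map_add, map_one, map_pow, expand_X, ← pow_mul, ← pow_mul, Nat.mul_comm]
  have key : F ^ (a * p + b) = expand (ZMod p) p (F ^ a) * F ^ b := by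
    rw [pow_add, Nat.mul_comm, pow_mul, hFp, ← map_pow]
  rw [trinomial_cast_eq, ← hF, key, coeff_mul]
  rw [Finset.sum_eq_single (a * p, b)]
  · rw [coeff_expand hp.pos, if_pos ⟨a, by ring⟩, Nat.mul_div_cancel _ hp.pos,
      trinomial_cast_eq, trinomial_cast_eq, ← hF]
  · rintro ⟨x, y⟩ hmem hne
    rw [Finset.HasAntidiagonal.mem_antidiagonal] at hmem
    rw [coeff_expand hp.pos]
    split
    · next hdvd =>
      obtain ⟨j, rfl⟩ := hdvd
      by_contra hcon
      have hy : (F ^ b).coeff y ≠ 0 := fun h => hcon (by simp [h])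
      have hyd : y ≤ 2 * b := by
        have := le_natDegree_of_ne_zero hy
        calc y ≤ (F ^ b).natDegree := this
          _ ≤ b * F.natDegree := natDegree_pow_le
          _ ≤ b * 2 := Nat.mul_le_mul_left _ hdegF
          _ = 2 * b := by ring
      have hap : a * p = p * a := Nat.mul_comm a p
      rcases lt_trichotomy j a with hja | rfl | haj
      · have h2 : p * j + p ≤ p * a := by
          have h3 := Nat.mul_le_mul_left p (Nat.succ_le_of_lt hja)
          rw [Nat.mul_succ] at h3
          omega
        omega
      · exact hne (by simp only [Prod.mk.injEq]; omega)
      · have h2 : p * a + p ≤ p * j := by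
          have h3 := Nat.mul_le_mul_left p (Nat.succ_le_of_lt haj)
          rw [Nat.mul_succ] at h3
          omega
        omega
    · exact zero_mul _
  · intro h
    exact (h (Finset.HasAntidiagonal.mem_antidiagonal.2 rfl)).elim
end

end PolyPart

section Helpers
open Finset
section
variable {p : ℕ} [hfp : Fact p.Prime]

lemma trinomial_zero : trinomial 0 = 1 := by simp [trinomial]

lemma trinomial_block (k c n : ℕ) (hn : n < p ^ k) :
    ((trinomial (c * p ^ k + n) : ZMod p)) = (trinomial c : ZMod p) * trinomial n := by
  have hp : p.Prime := Fact.out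
  induction k generalizing c n with
  | zero =>
    have : n = 0 := by simpa using hn
    subst this
    simp [trinomial_zero]
  | succ k ih =>
    have hq : n / p < p ^ k := by
      rw [Nat.div_lt_iff_lt_mul hp.pos, ← pow_succ]
      exact hn
    have hd : n / p * p + n % p = n := Nat.div_add_mod' n p
    have heq : c * p ^ (k + 1) + n = (c * p ^ k + n / p) * p + n % p := by
      calc c * p ^ (k + 1) + n = c * (p ^ k * p) + (n / p * p + n % p) := by rw [hd, pow_succ]
        _ = (c * p ^ k + n / p) * p + n % p := by ring
    rw [heq, trinomial_lucas' _ _ (Nat.mod_lt _ hp.pos), ih _ _ hq, mul_assoc,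
      ← trinomial_lucas' _ _ (Nat.mod_lt _ hp.pos), hd]

lemma trinomial_cast_ne_zero (h0 : ∀ i < p, ¬ p ∣ trinomial i) (x : ℕ) :
    (trinomial x : ZMod p) ≠ 0 := by
  have hp : p.Prime := Fact.out
  induction x using Nat.strong_induction_on with
  | _ x ih =>
    rcases lt_or_ge x p with h | h
    · rw [Ne, ZMod.natCast_eq_zero_iff]
      exact h0 x h
    · have hd : x / p * p + x % p = x := Nat.div_add_mod' x p
      rw [← hd, trinomial_lucas' _ _ (Nat.mod_lt _ hp.pos)]
      refine mul_ne_zero (ih _ (Nat.div_lt_self (by have := hp.two_le; omega) hp.one_lt)) ?_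
      rw [Ne, ZMod.natCast_eq_zero_iff]
      exact h0 _ (Nat.mod_lt _ hp.pos)

lemma trinomial_rep (i0 : ℕ) (hi0 : i0 < p) (e : ℕ) :
    ∃ r, r < p ^ e ∧ ((trinomial r : ZMod p)) = (trinomial i0 : ZMod p) ^ e := by
  have hp : p.Prime := Fact.out
  induction e with
  | zero => exact ⟨0, by norm_num, by simp [trinomial_zero]⟩
  | succ e ih =>
    obtain ⟨r, hr, heq⟩ := ih
    refine ⟨r * p + i0, ?_, ?_⟩
    · calc r * p + i0 < r * p + p := by omega
        _ = (r + 1) * p := by ring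
        _ ≤ p ^ e * p := Nat.mul_le_mul_right _ hr
        _ = p ^ (e + 1) := (pow_succ _ _).symm
    · rw [trinomial_lucas' _ _ hi0, heq, pow_succ]

lemma pow_surj_of_orderOf (g : ZMod p) (hg : orderOf g = p - 1) (u : ZMod p) (hu : u ≠ 0) :
    ∃ e, e < p - 1 ∧ g ^ e = u := by
  have hp : p.Prime := Fact.out
  have hp1 : 0 < p - 1 := by have := hp.two_le; omega
  have h1 : g ^ (p - 1) = 1 := hg ▸ pow_orderOf_eq_one g
  have hgu : IsUnit g := IsUnit.of_pow_eq_one h1 hp1.ne'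
  obtain ⟨gu, rfl⟩ := hgu
  have hou : orderOf gu = p - 1 := by rwa [orderOf_units] at hg
  have hcard : Fintype.card (ZMod p)ˣ = p - 1 := by
    rw [ZMod.card_units_eq_totient, Nat.totient_prime hp]
  have huu : IsUnit u := isUnit_iff_ne_zero.2 hu
  obtain ⟨uu, rfl⟩ := huu
  have hmem : uu ∈ Subgroup.zpowers gu := by
    have : Subgroup.zpowers gu = ⊤ := by
      apply Subgroup.eq_top_of_card_eq
      rw [Nat.card_zpowers, hou, Nat.card_eq_fintype_card, hcard]
    rw [this]
    trivial
  obtain ⟨n, hn⟩ := (mem_powers_iff_mem_zpowers.mpr hmem)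
  refine ⟨n % (p - 1), Nat.mod_lt _ hp1, ?_⟩
  have hpow : gu ^ (n % (p - 1)) = uu := by
    conv_lhs => rw [← hou, pow_mod_orderOf]
    exact hn
  rw [← Units.val_pow_eq_pow_val, hpow]
end

end Helpers

theorem trinomial_mod_p_uniformly_recurrent (p : ℕ) (hp : p.Prime) (hodd : Odd p)
    (h0 : ∀ i < p, ¬ p ∣ trinomial i)
    (hroot : ∃ i < p, orderOf ((trinomial i : ZMod p)) = p - 1) :
    ∀ i₀ m : ℕ, ∃ C : ℕ, ∀ i : ℕ, ∃ j : ℕ, i ≤ j ∧ j + m ≤ i + C ∧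
      ∀ t < m, trinomial (j + t) % p = trinomial (i₀ + t) % p := by
  haveI : Fact p.Prime := ⟨hp⟩
  intro i₀ m
  obtain ⟨is, hisp, hord⟩ := hroot
  set k := i₀ + m with hkdef
  set K := p ^ k with hKdef
  set B := p ^ (p - 1) with hBdef
  have hK : 0 < K := Nat.pow_pos hp.pos
  have hB : 0 < B := Nat.pow_pos hp.pos
  have hKbig : i₀ + m < K := Nat.lt_pow_self hp.one_lt
  refine ⟨K * (2 * B + 1) + i₀ + m, ?_⟩
  intro i
  set c := i / K + 1 with hcdef
  set c2 := c / B + 1 with hc2def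
  have hTc2 : (trinomial c2 : ZMod p) ≠ 0 := trinomial_cast_ne_zero h0 c2
  obtain ⟨e, he, hge⟩ := pow_surj_of_orderOf _ hord ((trinomial c2 : ZMod p))⁻¹ (inv_ne_zero hTc2)
  obtain ⟨r, hrB', hrg⟩ := trinomial_rep is hisp e
  have hrB : r < B := lt_of_lt_of_le hrB' (Nat.pow_le_pow_right hp.pos (by omega))
  set b := c2 * B + r with hbdef
  -- basic arithmetic facts
  have hiK : i / K * K + i % K = i := Nat.div_add_mod' i K
  have himK : i % K < K := Nat.mod_lt _ hK
  have hcK : c * K = i / K * K + K := by rw [hcdef]; ring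
  have hic : i < c * K := by omega
  have hcB : c / B * B + c % B = c := Nat.div_add_mod' c B
  have hcmB : c % B < B := Nat.mod_lt _ hB
  have hc2B : c2 * B = c / B * B + B := by rw [hc2def]; ring
  have hcc2 : c < c2 * B := by omega
  have hcb : c2 * B ≤ b := by omega
  have h_lo : i ≤ b * K + i₀ := by
    have h1 : c * K ≤ c2 * B * K := Nat.mul_le_mul_right _ (by omega)
    have h2 : c2 * B * K ≤ b * K := Nat.mul_le_mul_right _ hcb
    omega
  have h_hi : b * K + i₀ + m ≤ i + (K * (2 * B + 1) + i₀ + m) := by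
    have hble : b ≤ c + 2 * B := by
      have : c / B * B ≤ c := Nat.div_mul_le_self c B
      omega
    have h1 : b * K ≤ (c + 2 * B) * K := Nat.mul_le_mul_right _ hble
    have h2 : (c + 2 * B) * K = c * K + 2 * (B * K) := by ring
    have h3 : i / K * K ≤ i := Nat.div_mul_le_self i K
    have h4 : K * (2 * B + 1) = 2 * (B * K) + K := by ring
    omega
  refine ⟨b * K + i₀, h_lo, h_hi, ?_⟩
  intro t ht
  have hlt : i₀ + t < K := by omega
  have hmain : (trinomial (b * K + i₀ + t) : ZMod p) = (trinomial (i₀ + t) : ZMod p) := by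
    have h1 : b * K + i₀ + t = b * K + (i₀ + t) := by omega
    rw [h1, trinomial_block k b (i₀ + t) hlt]
    have hTb : (trinomial b : ZMod p) = 1 := by
      rw [hbdef, trinomial_block (p - 1) c2 r hrB, hrg, hge, mul_inv_cancel₀ hTc2]
    rw [hTb, one_mul]
  have := (ZMod.natCast_eq_natCast_iff _ _ _).mp hmain
  exact this
end

section
/- For p = 5, the sequence (T_n mod 5)_{n≥0} is the fixed point f^ω(1) of the morphism f on the alphabet {1,2,3,4} given by f(1)=11324, f(2)=22143, f(3)=33412, f(4)=44231; that is, T_{5n+k} ≡ T_n · T_k (mod 5) for 0 ≤ k ≤ 4, with (T_0,…,T_4) ≡ (1,1,3,2,4) (mod 5). -/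
open Polynomial

noncomputable def P : (ZMod 5)[X] := X ^ 2 + X + 1

lemma natDegree_P_pow_le (k : ℕ) : (P ^ k).natDegree ≤ 2 * k := by
  refine (natDegree_pow_le).trans ?_
  have : P.natDegree ≤ 2 := by
    unfold P
    compute_degree
  nlinarith [this]

lemma coeff_P_pow (n : ℕ) : (P ^ n).coeff n = (trinomial n : ZMod 5) := by
  have hP : P = X ^ 2 + (X + 1) := by unfold P; ring
  rw [hP, add_pow, finset_sum_coeff]
  unfold _root_.trinomial
  rw [Nat.cast_sum]
  apply Finset.sum_congr rfl
  intro k _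
  have h1 : (X ^ 2 : (ZMod 5)[X]) ^ k * (X + 1) ^ (n - k) * (n.choose k : (ZMod 5)[X])
      = ((X + 1) ^ (n - k) * C ((n.choose k : ZMod 5))) * X ^ (2 * k) := by
    rw [C_eq_natCast]; ring
  rw [h1, coeff_mul_X_pow']
  by_cases h : 2 * k ≤ n
  · rw [if_pos h, coeff_mul_C, coeff_X_add_one_pow]
    have h2 : (n - k).choose (n - 2 * k) = (n - k).choose k := by
      apply Nat.choose_symm_of_eq_add
      omega
    have h3 : n.choose (2 * k) * (2 * k).choose k = n.choose k * (n - k).choose k := by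
      have := Nat.choose_mul (n := n) (k := 2 * k) (s := k) (by omega)
      rw [this, show 2 * k - k = k from by omega]
    rw [h2, h3]
    push_cast
    ring
  · rw [if_neg h]
    have : n.choose (2 * k) = 0 := Nat.choose_eq_zero_of_lt (by omega)
    rw [this]
    simp

instance : Fact (Nat.Prime 5) := ⟨by norm_num⟩

lemma pow_five (f : (ZMod 5)[X]) : f ^ 5 = expand (ZMod 5) 5 f := by
  have h := Polynomial.map_frobenius_expand (R := ZMod 5) (p := 5) f
  rwa [ZMod.frobenius_zmod, Polynomial.map_id, eq_comm] at h

lemma key (n k : ℕ) (hk : k ≤ 4) :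
    (trinomial (5 * n + k) : ZMod 5) = (trinomial n : ZMod 5) * trinomial k := by
  have h1 : (P ^ (5 * n + k)).coeff (5 * n + k)
      = (expand (ZMod 5) 5 (P ^ n) * P ^ k).coeff (5 * n + k) := by
    rw [pow_add, pow_mul, pow_five, ← map_pow]
  rw [coeff_P_pow] at h1
  rw [h1, coeff_mul]
  rw [Finset.sum_eq_single (5 * n, k)]
  · rw [coeff_expand (by norm_num), if_pos ⟨n, by ring⟩]
    rw [show 5 * n / 5 = n from by omega, coeff_P_pow, coeff_P_pow]
  · rintro ⟨a, b⟩ hab hne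
    rw [Finset.HasAntidiagonal.mem_antidiagonal] at hab
    simp only [] at hab ⊢
    rw [coeff_expand (by norm_num)]
    by_cases h5 : 5 ∣ a
    · rw [if_pos h5]
      have hb : 2 * k < b := by
        obtain ⟨m, rfl⟩ := h5
        have hmn : m ≠ n := by rintro rfl; exact hne (by simp [Prod.ext_iff]; omega)
        omega
      have : (P ^ k).coeff b = 0 :=
        coeff_eq_zero_of_natDegree_lt (lt_of_le_of_lt (natDegree_P_pow_le k) hb)
      rw [this, mul_zero]
    · rw [if_neg h5, zero_mul]
  · intro h
    exact (h (Finset.HasAntidiagonal.mem_antidiagonal.2 rfl)).elim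

theorem trinomial_mod_five_morphic :
    trinomial 0 % 5 = 1 ∧ trinomial 1 % 5 = 1 ∧ trinomial 2 % 5 = 3 ∧
    trinomial 3 % 5 = 2 ∧ trinomial 4 % 5 = 4 ∧
    ∀ n : ℕ, ∀ k ≤ 4, trinomial (5 * n + k) % 5 = (trinomial n * trinomial k) % 5 := by
  refine ⟨by decide, by decide, by decide, by decide, by decide, ?_⟩
  intro n k hk
  have := key n k hk
  rw [← Nat.cast_mul, ZMod.natCast_eq_natCast_iff'] at this
  simpa using this
end
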